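/- An element f ∈ S̃_{-1} is invertible with respect to the Wick product (there exists g ∈ S̃_{-1} with f ⊗ g = g ⊗ f = 1) if and only if E[f] ≠ 0. -/

import Mathlib

/-- Weight `(2ℕ)^α = ∏_k (2 i_k)` of a word (letter `i` represents `z_{i+1}`). -/
noncomputable def ncWeight (α : FreeMonoid ℕ) : ℝ :=
  (FreeMonoid.toList α |>.map (fun i => (2 * (i + 1) : ℝ))).prod

/-- Wick product: monoid convolution `(f ⊗ g)_γ = ∑_{αβ = γ} f_α g_β`. -/
noncomputable def wick (f g : FreeMonoid ℕ → ℂ) (γ : FreeMonoid ℕ) : ℂ :=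
  ∑ j ∈ Finset.range ((FreeMonoid.toList γ).length + 1),
    f (FreeMonoid.ofList ((FreeMonoid.toList γ).take j)) *
      g (FreeMonoid.ofList ((FreeMonoid.toList γ).drop j))

/-- The unit for the Wick product: the indicator of the empty word. -/
noncomputable def wickUnit : FreeMonoid ℕ → ℂ :=
  fun γ => if FreeMonoid.toList γ = [] then 1 else 0

/-- Membership in the non-commutative Kondratiev space
`S̃₋₁ = ⋃_p L²(ℓ̃, μ_{-p})`. -/
def memS (f : FreeMonoid ℕ → ℂ) : Prop :=
  ∃ p : ℕ, Summable (fun α => ‖f α‖ ^ 2 * ncWeight α ^ (-(p : ℤ)))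

namespace WickAux


noncomputable def w (l : List ℕ) : ℝ := (l.map (fun i => (2 * (i + 1) : ℝ))).prod

lemma ncWeight_eq (α : FreeMonoid ℕ) : ncWeight α = w (FreeMonoid.toList α) := rfl

lemma two_pow_le_w (l : List ℕ) : (2 : ℝ) ^ l.length ≤ w l := by
  induction l with
  | nil => simp [w]
  | cons a t ih =>
    simp only [w, List.map_cons, List.prod_cons, List.length_cons, pow_succ]
    calc (2:ℝ) ^ t.length * 2 ≤ (2 * (a+1)) * ((2:ℝ) ^ t.length) := by
          have h1 : (1:ℝ) ≤ (a:ℝ) + 1 := by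
            have := Nat.cast_nonneg (α := ℝ) a; linarith
          have : (2:ℝ) ≤ 2 * (a+1) := by nlinarith
          nlinarith [pow_pos (by norm_num : (0:ℝ) < 2) t.length]
      _ ≤ (2 * (↑a + 1)) * w t := by
          have h2 : (0:ℝ) < 2 * (a+1) := by positivity
          exact mul_le_mul_of_nonneg_left ih (le_of_lt h2)

lemma w_pos (l : List ℕ) : 0 < w l :=
  lt_of_lt_of_le (pow_pos (by norm_num) l.length) (two_pow_le_w l)

lemma one_le_w (l : List ℕ) : (1:ℝ) ≤ w l :=
  le_trans (one_le_pow₀ (by norm_num)) (two_pow_le_w l)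

lemma w_append (a b : List ℕ) : w (a ++ b) = w a * w b := by
  simp [w, List.map_append]

lemma two_le_w {l : List ℕ} (hl : l ≠ []) : (2:ℝ) ≤ w l := by
  have h1 : 1 ≤ l.length := List.length_pos_iff.mpr hl
  calc (2:ℝ) = 2^1 := by norm_num
    _ ≤ 2 ^ l.length := pow_le_pow_right₀ (by norm_num) h1
    _ ≤ w l := two_pow_le_w l



lemma wickUnit_apply (γ : FreeMonoid ℕ) :
    wickUnit γ = if FreeMonoid.toList γ = [] then 1 else 0 := rfl

lemma wickUnit_one : wickUnit 1 = 1 := by simp [wickUnit]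

lemma wick_unit_left (g : FreeMonoid ℕ → ℂ) : wick wickUnit g = g := by
  funext γ
  unfold wick
  rw [Finset.sum_eq_single 0]
  · simp [wickUnit]
  · intro j hj hj0
    have : (FreeMonoid.toList γ).take j ≠ [] := by
      have hj' : j ≤ (FreeMonoid.toList γ).length := Nat.lt_succ_iff.mp (Finset.mem_range.mp hj)
      intro h
      rw [List.take_eq_nil_iff] at h
      rcases h with h1 | h1
      · exact hj0 h1
      · rw [h1] at hj'; simp at hj'; exact hj0 hj'
    simp [wickUnit, this]
  · intro h; simp at h

lemma wick_unit_right (g : FreeMonoid ℕ → ℂ) : wick g wickUnit = g := by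
  funext γ
  unfold wick
  rw [Finset.sum_eq_single ((FreeMonoid.toList γ).length)]
  · simp [wickUnit]
  · intro j hj hj0
    have hj' : j ≤ (FreeMonoid.toList γ).length := Nat.lt_succ_iff.mp (Finset.mem_range.mp hj)
    have : (FreeMonoid.toList γ).drop j ≠ [] := by
      intro h
      have := congrArg List.length h
      simp [List.length_drop] at this
      omega
    simp [wickUnit, this]
  · intro h; simp at h

lemma wick_sub_left (f g k : FreeMonoid ℕ → ℂ) :
    wick (f - g) k = wick f k - wick g k := by
  funext γ
  simp [wick, sub_mul, Finset.sum_sub_distrib]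

lemma wick_smul_left (a : ℂ) (f k : FreeMonoid ℕ → ℂ) :
    wick (fun γ => a * f γ) k = fun γ => a * wick f k γ := by
  funext γ
  simp [wick, Finset.mul_sum, mul_assoc]

lemma wick_smul_right (a : ℂ) (f k : FreeMonoid ℕ → ℂ) :
    wick f (fun γ => a * k γ) = fun γ => a * wick f k γ := by
  funext γ
  simp only [wick, Finset.mul_sum]
  congr 1; funext j; ring

lemma wick_assoc (f g k : FreeMonoid ℕ → ℂ) :
    wick (wick f g) k = wick f (wick g k) := by
  funext γ
  set l := FreeMonoid.toList γ with hl
  have hto : ∀ m : List ℕ, FreeMonoid.toList (FreeMonoid.ofList m) = m := fun m => rfl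
  unfold wick
  simp only [hto, ← hl]
  -- LHS: ∑ j ∑ i∈range(j+1) f(take i (take j l)) g(drop i (take j l)) k(drop j l)
  -- RHS: ∑ i f(take i l) ∑ c∈range((drop i l).length+1) g(take c (drop i l)) k (drop c (drop i l))
  simp only [Finset.sum_mul, Finset.mul_sum]
  rw [Finset.sum_sigma', Finset.sum_sigma']
  refine Finset.sum_nbij' (fun p => ⟨p.2, p.1 - p.2⟩) (fun p => ⟨p.1 + p.2, p.1⟩) ?_ ?_ ?_ ?_ ?_
  · rintro ⟨j, i⟩ hp
    simp only [Finset.mem_sigma, Finset.mem_range, List.length_take, List.length_drop] at hp ⊢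
    omega
  · rintro ⟨i, c⟩ hp
    simp only [Finset.mem_sigma, Finset.mem_range, List.length_take, List.length_drop, List.length_drop] at hp ⊢
    omega
  · rintro ⟨j, i⟩ hp
    simp only [Finset.mem_sigma, Finset.mem_range, List.length_take, List.length_drop] at hp
    have : i + (j - i) = j := by omega
    simp [this]
  · rintro ⟨i, c⟩ hp
    simp only [Finset.mem_sigma, Finset.mem_range, List.length_take, List.length_drop] at hp
    have : i + c - i = c := by omega
    simp [this]
  · rintro ⟨j, i⟩ hp
    simp only [Finset.mem_sigma, Finset.mem_range, List.length_take, List.length_drop] at hp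
    obtain ⟨hj, hi⟩ := hp
    have hij : i ≤ j := by omega
    have h1 : (l.take j).take i = l.take i := by
      rw [List.take_take]; congr 1; omega
    have h2 : (l.take j).drop i = (l.drop i).take (j - i) := by
      rw [List.drop_take]
    have h3 : (l.drop i).drop (j - i) = l.drop j := by
      rw [List.drop_drop]; congr 1; omega
    rw [h1, h2, h3, mul_assoc]


noncomputable def wpow (h : FreeMonoid ℕ → ℂ) : ℕ → (FreeMonoid ℕ → ℂ)
  | 0 => wickUnit
  | n + 1 => wick h (wpow h n)

lemma wpow_succ_right (h : FreeMonoid ℕ → ℂ) (n : ℕ) :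
    wpow h (n + 1) = wick (wpow h n) h := by
  induction n with
  | zero => simp [wpow, wick_unit_left, wick_unit_right]
  | succ n ih =>
    calc wpow h (n+2) = wick h (wpow h (n+1)) := rfl
      _ = wick h (wick (wpow h n) h) := by rw [ih]
      _ = wick (wick h (wpow h n)) h := (wick_assoc _ _ _).symm
      _ = wick (wpow h (n+1)) h := rfl

lemma wpow_eq_zero (h : FreeMonoid ℕ → ℂ) (hh : h 1 = 0) (n : ℕ) (γ : FreeMonoid ℕ)
    (hn : (FreeMonoid.toList γ).length < n) : wpow h n γ = 0 := by
  induction n generalizing γ with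
  | zero => omega
  | succ n ih =>
    show wick h (wpow h n) γ = 0
    unfold wick
    apply Finset.sum_eq_zero
    intro j hj
    rcases Nat.eq_zero_or_pos j with hj0 | hj0
    · subst hj0
      have : FreeMonoid.ofList (List.take 0 (FreeMonoid.toList γ)) = 1 := rfl
      rw [this, hh, zero_mul]
    · have : wpow h n (FreeMonoid.ofList ((FreeMonoid.toList γ).drop j)) = 0 := by
        apply ih
        have : (FreeMonoid.toList (FreeMonoid.ofList ((FreeMonoid.toList γ).drop j))) =
            (FreeMonoid.toList γ).drop j := rfl
        rw [this, List.length_drop]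
        have hj' := Finset.mem_range.mp hj
        omega
      rw [this, mul_zero]

noncomputable def wsum (h : FreeMonoid ℕ → ℂ) (γ : FreeMonoid ℕ) : ℂ :=
  ∑ n ∈ Finset.range ((FreeMonoid.toList γ).length + 1), wpow h n γ

lemma wsum_eq (h : FreeMonoid ℕ → ℂ) (hh : h 1 = 0) (γ : FreeMonoid ℕ) (N : ℕ)
    (hN : (FreeMonoid.toList γ).length < N) :
    wsum h γ = ∑ n ∈ Finset.range N, wpow h n γ := by
  unfold wsum
  apply Finset.sum_subset
  · intro x hx
    simp only [Finset.mem_range] at hx ⊢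
    omega
  · intro x _ hx
    simp only [Finset.mem_range] at hx
    exact wpow_eq_zero h hh x γ (by omega)

lemma wick_wsum_left (h : FreeMonoid ℕ → ℂ) (hh : h 1 = 0) (γ : FreeMonoid ℕ) :
    wick h (wsum h) γ = wsum h γ - wickUnit γ := by
  set l := FreeMonoid.toList γ with hl
  set m := l.length with hm
  have step1 : wick h (wsum h) γ =
      ∑ j ∈ Finset.range (m+1), ∑ n ∈ Finset.range (m+1),
        h (FreeMonoid.ofList (l.take j)) * wpow h n (FreeMonoid.ofList (l.drop j)) := by
    unfold wick
    apply Finset.sum_congr rfl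
    intro j hj
    rw [wsum_eq h hh _ (m+1), Finset.mul_sum]
    show ((l.drop j).length) < m + 1
    rw [List.length_drop]; omega
  rw [step1, Finset.sum_comm]
  have step2 : ∀ n, (∑ j ∈ Finset.range (m+1),
      h (FreeMonoid.ofList (l.take j)) * wpow h n (FreeMonoid.ofList (l.drop j)))
      = wpow h (n+1) γ := by
    intro n
    rfl
  rw [Finset.sum_congr rfl (fun n _ => step2 n)]
  have step3 : ∑ n ∈ Finset.range (m+2), wpow h n γ
      = (∑ n ∈ Finset.range (m+1), wpow h (n+1) γ) + wpow h 0 γ := by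
    exact Finset.sum_range_succ' _ _
  have step4 : ∑ n ∈ Finset.range (m+2), wpow h n γ
      = wsum h γ + wpow h (m+1) γ := by
    rw [Finset.sum_range_succ]; rfl
  have step5 : wpow h (m+1) γ = 0 := wpow_eq_zero h hh _ γ (by rw [← hl]; omega)
  have : wpow h 0 γ = wickUnit γ := rfl
  rw [← this]
  rw [step5, add_zero] at step4
  rw [← step4, step3]
  ring

lemma wick_wsum_right (h : FreeMonoid ℕ → ℂ) (hh : h 1 = 0) (γ : FreeMonoid ℕ) :
    wick (wsum h) h γ = wsum h γ - wickUnit γ := by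
  set l := FreeMonoid.toList γ with hl
  set m := l.length with hm
  have step1 : wick (wsum h) h γ =
      ∑ j ∈ Finset.range (m+1), ∑ n ∈ Finset.range (m+1),
        wpow h n (FreeMonoid.ofList (l.take j)) * h (FreeMonoid.ofList (l.drop j)) := by
    unfold wick
    apply Finset.sum_congr rfl
    intro j hj
    rw [wsum_eq h hh _ (m+1), Finset.sum_mul]
    show ((l.take j).length) < m + 1
    rw [List.length_take]
    have := Finset.mem_range.mp hj
    omega
  rw [step1, Finset.sum_comm]
  have step2 : ∀ n, (∑ j ∈ Finset.range (m+1),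
      wpow h n (FreeMonoid.ofList (l.take j)) * h (FreeMonoid.ofList (l.drop j)))
      = wpow h (n+1) γ := by
    intro n
    rw [wpow_succ_right]
    rfl
  rw [Finset.sum_congr rfl (fun n _ => step2 n)]
  have step3 : ∑ n ∈ Finset.range (m+2), wpow h n γ
      = (∑ n ∈ Finset.range (m+1), wpow h (n+1) γ) + wpow h 0 γ := by
    exact Finset.sum_range_succ' _ _
  have step4 : ∑ n ∈ Finset.range (m+2), wpow h n γ
      = wsum h γ + wpow h (m+1) γ := by
    rw [Finset.sum_range_succ]; rfl
  have step5 : wpow h (m+1) γ = 0 := wpow_eq_zero h hh _ γ (by rw [← hl]; omega)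
  have : wpow h 0 γ = wickUnit γ := rfl
  rw [← this]
  rw [step5, add_zero] at step4
  rw [← step4, step3]
  ring

open ENNReal

noncomputable def en2 (x : FreeMonoid ℕ → ℂ) (q : ℕ) (γ : FreeMonoid ℕ) : ℝ :=
  ‖x γ‖ ^ 2 * w (FreeMonoid.toList γ) ^ (-(q : ℤ))

lemma en2_nonneg (x : FreeMonoid ℕ → ℂ) (q : ℕ) (γ : FreeMonoid ℕ) : 0 ≤ en2 x q γ := by
  unfold en2
  have := w_pos (FreeMonoid.toList γ)
  positivity

noncomputable def eN (x : FreeMonoid ℕ → ℂ) (q : ℕ) : ℝ≥0∞ :=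
  ∑' γ, ENNReal.ofReal (en2 x q γ)

lemma summable_of_eN {x : FreeMonoid ℕ → ℂ} {q : ℕ} (h : eN x q ≠ ⊤) :
    Summable (fun α => ‖x α‖ ^ 2 * ncWeight α ^ (-(q : ℤ))) := by
  have h2 := ENNReal.summable_toReal h
  have : (fun α => ‖x α‖ ^ 2 * ncWeight α ^ (-(q : ℤ)))
      = fun α => (ENNReal.ofReal (en2 x q α)).toReal := by
    funext α
    rw [ENNReal.toReal_ofReal (en2_nonneg x q α)]
    rfl
  rw [this]
  exact h2

lemma eN_ne_top_of_summable {x : FreeMonoid ℕ → ℂ} {q : ℕ}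
    (h : Summable (fun α => ‖x α‖ ^ 2 * ncWeight α ^ (-(q : ℤ)))) : eN x q ≠ ⊤ := by
  have h' : Summable (fun α => en2 x q α) := h
  have : eN x q = ENNReal.ofReal (∑' α, en2 x q α) :=
    (ENNReal.ofReal_tsum_of_nonneg (fun α => en2_nonneg x q α) h').symm
  rw [this]
  exact ENNReal.ofReal_ne_top

lemma toList_eq_nil_iff (γ : FreeMonoid ℕ) : FreeMonoid.toList γ = [] ↔ γ = 1 := by
  constructor
  · intro h
    have := FreeMonoid.toList.injective (a₁ := γ) (a₂ := 1)
    apply this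
    simpa using h
  · intro h; subst h; rfl

lemma eN_unit (q : ℕ) : eN wickUnit q = 1 := by
  unfold eN
  rw [tsum_eq_single 1]
  · have h1 : wickUnit 1 = 1 := by unfold wickUnit; rw [if_pos FreeMonoid.toList_one]
    unfold en2
    rw [h1]
    have : w (FreeMonoid.toList (1 : FreeMonoid ℕ)) = 1 := by
      simp [w]
    rw [this]
    simp
  · intro γ hγ
    have : wickUnit γ = 0 := by
      unfold wickUnit
      rw [if_neg]
      rw [toList_eq_nil_iff]
      exact hγ
    unfold en2
    rw [this]
    simp


-- helper: 2^j * wt^(-(p+1)) ≤ wt^(-p) when 2^j ≤ wt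
lemma pow_mul_zpow_le {wt : ℝ} (hwt : 0 < wt) {j p : ℕ} (h : (2:ℝ) ^ j ≤ wt) :
    (2:ℝ) ^ j * wt ^ (-((p:ℕ)+1 : ℤ)) ≤ wt ^ (-(p : ℤ)) := by
  have hz : wt ^ (-((p:ℕ)+1 : ℤ)) = wt ^ (-(p:ℤ)) * wt⁻¹ := by
    rw [← zpow_neg_one wt, ← zpow_add₀ (ne_of_gt hwt)]
    ring_nf
  rw [hz, ← mul_assoc]
  have h1 : (2:ℝ)^j * wt⁻¹ ≤ 1 := by
    rw [← div_eq_mul_inv, div_le_one hwt]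
    exact h
  have h2 : (0:ℝ) < wt ^ (-(p:ℤ)) := zpow_pos hwt _
  calc (2:ℝ)^j * wt ^ (-(p:ℤ)) * wt⁻¹ = ((2:ℝ)^j * wt⁻¹) * wt ^ (-(p:ℤ)) := by ring
    _ ≤ 1 * wt ^ (-(p:ℤ)) := mul_le_mul_of_nonneg_right h1 (le_of_lt h2)
    _ = wt ^ (-(p:ℤ)) := one_mul _

/-- Pointwise Cauchy–Schwarz / Våge estimate. -/
lemma vage_pointwise (h x : FreeMonoid ℕ → ℂ) (p : ℕ) (γ : FreeMonoid ℕ) :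
    en2 (wick h x) (p+1) γ ≤
      2 * ∑ j ∈ Finset.range ((FreeMonoid.toList γ).length + 1),
        en2 h p (FreeMonoid.ofList ((FreeMonoid.toList γ).take j)) *
          en2 x (p+1) (FreeMonoid.ofList ((FreeMonoid.toList γ).drop j)) := by
  set l := FreeMonoid.toList γ with hl
  set n := l.length with hn
  set a : ℕ → ℝ := fun j => ‖h (FreeMonoid.ofList (l.take j))‖ * ‖x (FreeMonoid.ofList (l.drop j))‖
    with ha
  have ha_nonneg : ∀ j, 0 ≤ a j := fun j => mul_nonneg (norm_nonneg _) (norm_nonneg _)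
  -- step 1 : ‖wick h x γ‖ ≤ ∑ a j
  have h1 : ‖wick h x γ‖ ≤ ∑ j ∈ Finset.range (n+1), a j := by
    unfold wick
    refine le_trans (norm_sum_le _ _) ?_
    apply Finset.sum_le_sum
    intro j _
    rw [norm_mul]
  -- step 2 : (∑ a j)^2 ≤ 2 * ∑ 2^j a j ^ 2
  have h2 : (∑ j ∈ Finset.range (n+1), a j) ^ 2
      ≤ 2 * ∑ j ∈ Finset.range (n+1), 2 ^ j * a j ^ 2 := by
    have hsq2 : (Real.sqrt 2) ^ 2 = 2 := Real.sq_sqrt (by norm_num)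
    have key : ∀ j, a j = ((Real.sqrt 2) ^ j)⁻¹ * ((Real.sqrt 2) ^ j * a j) := by
      intro j
      have : (Real.sqrt 2) ^ j ≠ 0 := by positivity
      field_simp
    calc (∑ j ∈ Finset.range (n+1), a j) ^ 2
        = (∑ j ∈ Finset.range (n+1),
            ((Real.sqrt 2) ^ j)⁻¹ * ((Real.sqrt 2) ^ j * a j)) ^ 2 := by
          congr 1; exact Finset.sum_congr rfl (fun j _ => key j)
      _ ≤ (∑ j ∈ Finset.range (n+1), (((Real.sqrt 2) ^ j)⁻¹) ^ 2) *
            (∑ j ∈ Finset.range (n+1), ((Real.sqrt 2) ^ j * a j) ^ 2) :=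
          Finset.sum_mul_sq_le_sq_mul_sq _ _ _
      _ ≤ 2 * ∑ j ∈ Finset.range (n+1), 2 ^ j * a j ^ 2 := by
          have e1 : ∀ j : ℕ, (((Real.sqrt 2) ^ j)⁻¹) ^ 2 = (1/2 : ℝ) ^ j := by
            intro j
            have hp2 : ((Real.sqrt 2) ^ j) ^ 2 = 2 ^ j := by
              rw [← pow_mul, mul_comm j 2, pow_mul, hsq2]
            rw [inv_pow, hp2, one_div, inv_pow]
          have e2 : ∀ j : ℕ, ((Real.sqrt 2) ^ j * a j) ^ 2 = 2 ^ j * a j ^ 2 := by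
            intro j
            rw [mul_pow, ← pow_mul, mul_comm j 2, pow_mul, hsq2]
          have b1 : (∑ j ∈ Finset.range (n+1), (((Real.sqrt 2) ^ j)⁻¹) ^ 2) ≤ 2 := by
            rw [Finset.sum_congr rfl (fun j _ => e1 j)]
            exact sum_geometric_two_le _
          have b2 : 0 ≤ ∑ j ∈ Finset.range (n+1), ((Real.sqrt 2) ^ j * a j) ^ 2 :=
            Finset.sum_nonneg (fun j _ => sq_nonneg _)
          calc (∑ j ∈ Finset.range (n+1), (((Real.sqrt 2) ^ j)⁻¹) ^ 2) *
                (∑ j ∈ Finset.range (n+1), ((Real.sqrt 2) ^ j * a j) ^ 2)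
              ≤ 2 * (∑ j ∈ Finset.range (n+1), ((Real.sqrt 2) ^ j * a j) ^ 2) :=
                mul_le_mul_of_nonneg_right b1 b2
            _ = 2 * ∑ j ∈ Finset.range (n+1), 2 ^ j * a j ^ 2 := by
                congr 1; exact Finset.sum_congr rfl (fun j _ => e2 j)
  -- step 3: multiply by weight and distribute
  have hwpos := w_pos l
  have hwq : (0:ℝ) < w l ^ (-((p:ℕ)+1:ℤ)) := zpow_pos hwpos _
  have h3 : en2 (wick h x) (p+1) γ
      ≤ (2 * ∑ j ∈ Finset.range (n+1), 2 ^ j * a j ^ 2) * w l ^ (-((p:ℕ)+1:ℤ)) := by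
    unfold en2
    rw [← hl]
    apply mul_le_mul_of_nonneg_right _ (le_of_lt hwq)
    calc ‖wick h x γ‖ ^ 2 ≤ (∑ j ∈ Finset.range (n+1), a j) ^ 2 := by
          apply pow_le_pow_left₀ (norm_nonneg _) h1
      _ ≤ 2 * ∑ j ∈ Finset.range (n+1), 2 ^ j * a j ^ 2 := h2
  refine le_trans h3 ?_
  rw [mul_assoc 2, Finset.sum_mul]
  rw [mul_le_mul_iff_right₀ (by norm_num : (0:ℝ) < 2)]
  apply Finset.sum_le_sum
  intro j hj
  have hjn : j ≤ n := Nat.lt_succ_iff.mp (Finset.mem_range.mp hj)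
  set tk := l.take j with htk
  set dr := l.drop j with hdr
  have hsplit : w l = w tk * w dr := by
    rw [htk, hdr, ← w_append, List.take_append_drop]
  have htklen : tk.length = j := by
    rw [htk, List.length_take]; omega
  have h2j : (2:ℝ) ^ j ≤ w tk := by
    rw [← htklen]; exact two_pow_le_w tk
  have hz : w l ^ (-((p:ℕ)+1:ℤ)) = w tk ^ (-((p:ℕ)+1:ℤ)) * w dr ^ (-((p:ℕ)+1:ℤ)) := by
    rw [hsplit, mul_zpow]
  have e3 : FreeMonoid.toList (FreeMonoid.ofList tk) = tk := rfl
  have e4 : FreeMonoid.toList (FreeMonoid.ofList dr) = dr := rfl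
  unfold en2
  rw [e3, e4, ha]
  rw [hz]
  have expand : (2:ℝ)^j * (‖h (FreeMonoid.ofList tk)‖ * ‖x (FreeMonoid.ofList dr)‖)^2 *
      (w tk ^ (-((p:ℕ)+1:ℤ)) * w dr ^ (-((p:ℕ)+1:ℤ)))
      = ((2:ℝ)^j * w tk ^ (-((p:ℕ)+1:ℤ))) * ‖h (FreeMonoid.ofList tk)‖^2 *
        (‖x (FreeMonoid.ofList dr)‖^2 * w dr ^ (-((p:ℕ)+1:ℤ))) := by
    ring
  rw [expand]
  have key := pow_mul_zpow_le (w_pos tk) (p := p) h2j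
  have hrest : 0 ≤ ‖h (FreeMonoid.ofList tk)‖^2 *
      (‖x (FreeMonoid.ofList dr)‖^2 * w dr ^ (-((p:ℕ)+1:ℤ))) := by
    have := w_pos dr
    positivity
  calc ((2:ℝ)^j * w tk ^ (-((p:ℕ)+1:ℤ))) * ‖h (FreeMonoid.ofList tk)‖^2 *
        (‖x (FreeMonoid.ofList dr)‖^2 * w dr ^ (-((p:ℕ)+1:ℤ)))
      = ((2:ℝ)^j * w tk ^ (-((p:ℕ)+1:ℤ))) * (‖h (FreeMonoid.ofList tk)‖^2 *
        (‖x (FreeMonoid.ofList dr)‖^2 * w dr ^ (-((p:ℕ)+1:ℤ)))) := by ring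
    _ ≤ w tk ^ (-(p:ℤ)) * (‖h (FreeMonoid.ofList tk)‖^2 *
        (‖x (FreeMonoid.ofList dr)‖^2 * w dr ^ (-((p:ℕ)+1:ℤ)))) :=
        mul_le_mul_of_nonneg_right key hrest
    _ = ‖h (FreeMonoid.ofList tk)‖^2 * w tk ^ (-(p:ℤ)) *
        (‖x (FreeMonoid.ofList dr)‖^2 * w dr ^ (-((p:ℕ)+1:ℤ))) := by ring


open ENNReal in
/-- Summed Våge estimate: `eN (h ⊗ x) (p+1) ≤ 2 * eN h p * eN x (p+1)`. -/
lemma eN_wick_le (h x : FreeMonoid ℕ → ℂ) (p : ℕ) :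
    eN (wick h x) (p+1) ≤ 2 * (eN h p * eN x (p+1)) := by
  classical
  set G : FreeMonoid ℕ × FreeMonoid ℕ → ℝ≥0∞ :=
    fun q => ENNReal.ofReal (en2 h p q.1) * ENNReal.ofReal (en2 x (p+1) q.2) with hG
  set e : (Σ γ : FreeMonoid ℕ, Fin ((FreeMonoid.toList γ).length + 1)) →
      FreeMonoid ℕ × FreeMonoid ℕ :=
    fun σ => (FreeMonoid.ofList ((FreeMonoid.toList σ.1).take σ.2),
              FreeMonoid.ofList ((FreeMonoid.toList σ.1).drop σ.2)) with he
  have einj : Function.Injective e := by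
    rintro ⟨γ, j⟩ ⟨γ', j'⟩ hEq
    simp only [he, Prod.mk.injEq] at hEq
    obtain ⟨h1, h2⟩ := hEq
    have h1' : (FreeMonoid.toList γ).take j.val = (FreeMonoid.toList γ').take j'.val :=
      congrArg FreeMonoid.toList h1
    have h2' : (FreeMonoid.toList γ).drop j.val = (FreeMonoid.toList γ').drop j'.val :=
      congrArg FreeMonoid.toList h2
    have hγ : γ = γ' := by
      apply FreeMonoid.toList.injective
      rw [← List.take_append_drop j.val (FreeMonoid.toList γ), h1', h2',
        List.take_append_drop]
    subst hγ
    have hj : j.val = j'.val := by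
      have l1 : ((FreeMonoid.toList γ).take j.val).length = j.val := by
        rw [List.length_take]
        have := j.isLt; omega
      have l2 : ((FreeMonoid.toList γ).take j'.val).length = j'.val := by
        rw [List.length_take]
        have := j'.isLt; omega
      rw [← l1, h1', l2]
    rw [Fin.ext hj]
  calc eN (wick h x) (p+1)
      ≤ ∑' γ, ENNReal.ofReal (2 * ∑ j ∈ Finset.range ((FreeMonoid.toList γ).length + 1),
          en2 h p (FreeMonoid.ofList ((FreeMonoid.toList γ).take j)) *
            en2 x (p+1) (FreeMonoid.ofList ((FreeMonoid.toList γ).drop j))) := by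
        apply ENNReal.tsum_le_tsum
        intro γ
        exact ENNReal.ofReal_le_ofReal (vage_pointwise h x p γ)
    _ = ∑' γ, 2 * ∑ j ∈ Finset.range ((FreeMonoid.toList γ).length + 1),
          ENNReal.ofReal (en2 h p (FreeMonoid.ofList ((FreeMonoid.toList γ).take j)) *
            en2 x (p+1) (FreeMonoid.ofList ((FreeMonoid.toList γ).drop j))) := by
        apply tsum_congr
        intro γ
        rw [ENNReal.ofReal_mul (by norm_num)]
        congr 1
        · simp
        · exact ENNReal.ofReal_sum_of_nonneg
            (fun j _ => mul_nonneg (en2_nonneg _ _ _) (en2_nonneg _ _ _))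
    _ = 2 * ∑' γ, ∑ j ∈ Finset.range ((FreeMonoid.toList γ).length + 1),
          ENNReal.ofReal (en2 h p (FreeMonoid.ofList ((FreeMonoid.toList γ).take j)) *
            en2 x (p+1) (FreeMonoid.ofList ((FreeMonoid.toList γ).drop j))) := by
        rw [ENNReal.tsum_mul_left]
    _ = 2 * ∑' (σ : Σ γ : FreeMonoid ℕ, Fin ((FreeMonoid.toList γ).length + 1)), G (e σ) := by
        congr 1
        rw [ENNReal.tsum_sigma']
        apply tsum_congr
        intro γ
        rw [tsum_fintype]
        rw [← Fin.sum_univ_eq_sum_range (fun j =>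
          ENNReal.ofReal (en2 h p (FreeMonoid.ofList ((FreeMonoid.toList γ).take j)) *
            en2 x (p+1) (FreeMonoid.ofList ((FreeMonoid.toList γ).drop j))))]
        apply Finset.sum_congr rfl
        intro j _
        rw [hG, he]
        simp only []
        rw [ENNReal.ofReal_mul (en2_nonneg _ _ _)]
    _ ≤ 2 * ∑' q, G q := by
        apply mul_le_mul_right
        exact ENNReal.tsum_comp_le_tsum_of_injective einj G
    _ = 2 * (eN h p * eN x (p+1)) := by
        congr 1
        have hpr : ∑' q, G q = ∑' (a : FreeMonoid ℕ) (b : FreeMonoid ℕ),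
            ENNReal.ofReal (en2 h p a) * ENNReal.ofReal (en2 x (p+1) b) :=
          ENNReal.tsum_prod
            (f := fun a b => ENNReal.ofReal (en2 h p a) * ENNReal.ofReal (en2 x (p+1) b))
        rw [hpr]
        unfold eN
        rw [← ENNReal.tsum_mul_right]
        apply tsum_congr
        intro α
        rw [← ENNReal.tsum_mul_left]


lemma en2_decay {h : FreeMonoid ℕ → ℂ} (hh : h 1 = 0) (p k : ℕ) (γ : FreeMonoid ℕ) :
    en2 h (p+k) γ ≤ (1/2:ℝ)^k * en2 h p γ := by
  by_cases hγ : γ = 1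
  · subst hγ
    unfold en2
    rw [hh]
    simp
  · have hne : FreeMonoid.toList γ ≠ [] := by
      rw [ne_eq, toList_eq_nil_iff]; exact hγ
    set l := FreeMonoid.toList γ
    have h2w : (2:ℝ) ≤ w l := two_le_w hne
    have hwpos : (0:ℝ) < w l := w_pos l
    unfold en2
    have hsplit : w l ^ (-(((p:ℕ)+k : ℕ) : ℤ)) = w l ^ (-(p:ℤ)) * (w l ^ k)⁻¹ := by
      rw [← zpow_natCast (w l) k, ← zpow_neg, ← zpow_add₀ (ne_of_gt hwpos)]
      congr 1
      push_cast
      ring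
    rw [hsplit]
    have hbound : (w l ^ k)⁻¹ ≤ (1/2:ℝ)^k := by
      rw [one_div, inv_pow]
      apply inv_anti₀ (by positivity)
      exact pow_le_pow_left₀ (by norm_num) h2w k
    have hnn : (0:ℝ) ≤ ‖h γ‖^2 * w l ^ (-(p:ℤ)) := by
      have := zpow_pos hwpos (-(p:ℤ)); positivity
    calc ‖h γ‖^2 * (w l ^ (-(p:ℤ)) * (w l ^ k)⁻¹)
        = (w l ^ k)⁻¹ * (‖h γ‖^2 * w l ^ (-(p:ℤ))) := by ring
      _ ≤ (1/2:ℝ)^k * (‖h γ‖^2 * w l ^ (-(p:ℤ))) :=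
          mul_le_mul_of_nonneg_right hbound hnn
      _ = (1/2:ℝ)^k * (‖h γ‖^2 * w l ^ (-(p:ℤ))) := rfl

lemma eN_decay {h : FreeMonoid ℕ → ℂ} (hh : h 1 = 0) (p k : ℕ) :
    eN h (p+k) ≤ ENNReal.ofReal ((1/2:ℝ)^k) * eN h p := by
  unfold eN
  rw [← ENNReal.tsum_mul_left]
  apply ENNReal.tsum_le_tsum
  intro γ
  rw [← ENNReal.ofReal_mul (by positivity)]
  exact ENNReal.ofReal_le_ofReal (en2_decay hh p k γ)

lemma eN_wpow_le (h : FreeMonoid ℕ → ℂ) (p n : ℕ) :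
    eN (wpow h n) (p+1) ≤ (2 * eN h p)^n := by
  induction n with
  | zero =>
    rw [pow_zero]
    show eN wickUnit (p+1) ≤ 1
    rw [eN_unit]
  | succ n ih =>
    calc eN (wpow h (n+1)) (p+1) = eN (wick h (wpow h n)) (p+1) := rfl
      _ ≤ 2 * (eN h p * eN (wpow h n) (p+1)) := eN_wick_le h (wpow h n) p
      _ ≤ 2 * (eN h p * (2 * eN h p)^n) := by
          apply mul_le_mul_right
          exact mul_le_mul_right ih _
      _ = (2 * eN h p)^(n+1) := by ring




lemma wick_sub_right (k f g : FreeMonoid ℕ → ℂ) :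
    wick k (f - g) = wick k f - wick k g := by
  funext γ
  simp [wick, mul_sub, Finset.sum_sub_distrib]

lemma wick_apply_one (f g : FreeMonoid ℕ → ℂ) : wick f g 1 = f 1 * g 1 := by
  unfold wick
  rw [FreeMonoid.toList_one]
  simp

/-- abstract weighted Cauchy–Schwarz -/
lemma weighted_cs (a : ℕ → ℝ) (m : ℕ) :
    (∑ j ∈ Finset.range (m+1), a j) ^ 2
      ≤ 2 * ∑ j ∈ Finset.range (m+1), 2 ^ j * a j ^ 2 := by
  have hsq2 : (Real.sqrt 2) ^ 2 = 2 := Real.sq_sqrt (by norm_num)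
  have key : ∀ j, a j = ((Real.sqrt 2) ^ j)⁻¹ * ((Real.sqrt 2) ^ j * a j) := by
    intro j
    have : (Real.sqrt 2) ^ j ≠ 0 := by positivity
    field_simp
  calc (∑ j ∈ Finset.range (m+1), a j) ^ 2
      = (∑ j ∈ Finset.range (m+1),
          ((Real.sqrt 2) ^ j)⁻¹ * ((Real.sqrt 2) ^ j * a j)) ^ 2 := by
        congr 1; exact Finset.sum_congr rfl (fun j _ => key j)
    _ ≤ (∑ j ∈ Finset.range (m+1), (((Real.sqrt 2) ^ j)⁻¹) ^ 2) *
          (∑ j ∈ Finset.range (m+1), ((Real.sqrt 2) ^ j * a j) ^ 2) :=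
        Finset.sum_mul_sq_le_sq_mul_sq _ _ _
    _ ≤ 2 * ∑ j ∈ Finset.range (m+1), 2 ^ j * a j ^ 2 := by
        have e1 : ∀ j : ℕ, (((Real.sqrt 2) ^ j)⁻¹) ^ 2 = (1/2 : ℝ) ^ j := by
          intro j
          have hp2 : ((Real.sqrt 2) ^ j) ^ 2 = 2 ^ j := by
            rw [← pow_mul, mul_comm j 2, pow_mul, hsq2]
          rw [inv_pow, hp2, one_div, inv_pow]
        have e2 : ∀ j : ℕ, ((Real.sqrt 2) ^ j * a j) ^ 2 = 2 ^ j * a j ^ 2 := by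
          intro j
          rw [mul_pow, ← pow_mul, mul_comm j 2, pow_mul, hsq2]
        have b1 : (∑ j ∈ Finset.range (m+1), (((Real.sqrt 2) ^ j)⁻¹) ^ 2) ≤ 2 := by
          rw [Finset.sum_congr rfl (fun j _ => e1 j)]
          exact sum_geometric_two_le _
        have b2 : 0 ≤ ∑ j ∈ Finset.range (m+1), ((Real.sqrt 2) ^ j * a j) ^ 2 :=
          Finset.sum_nonneg (fun j _ => sq_nonneg _)
        calc (∑ j ∈ Finset.range (m+1), (((Real.sqrt 2) ^ j)⁻¹) ^ 2) *
              (∑ j ∈ Finset.range (m+1), ((Real.sqrt 2) ^ j * a j) ^ 2)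
            ≤ 2 * (∑ j ∈ Finset.range (m+1), ((Real.sqrt 2) ^ j * a j) ^ 2) :=
              mul_le_mul_of_nonneg_right b1 b2
          _ = 2 * ∑ j ∈ Finset.range (m+1), 2 ^ j * a j ^ 2 := by
              congr 1; exact Finset.sum_congr rfl (fun j _ => e2 j)

end WickAux

open WickAux ENNReal in
theorem wick_invertible_iff (f : FreeMonoid ℕ → ℂ) (hf : memS f) :
    (∃ g : FreeMonoid ℕ → ℂ, memS g ∧ wick f g = wickUnit ∧ wick g f = wickUnit) ↔
      f 1 ≠ 0 := by
  constructor
  · rintro ⟨g, _, hfg, _⟩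
    have h1 : wick f g 1 = 1 := by rw [hfg, wickUnit_one]
    rw [wick_apply_one] at h1
    exact left_ne_zero_of_mul_eq_one h1
  · intro hf0
    -- setup
    set c : ℂ := (f 1)⁻¹ with hc
    set h : FreeMonoid ℕ → ℂ := fun α => wickUnit α - c * f α with hh_def
    have hh : h 1 = 0 := by
      rw [hh_def]
      simp only [wickUnit_one, hc]
      rw [inv_mul_cancel₀ hf0]
      ring
    set g : FreeMonoid ℕ → ℂ := fun γ => c * wsum h γ with hg_def
    -- the two algebraic identities
    have hf_eq : f = fun α => f 1 * (wickUnit α - h α) := by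
      funext α
      rw [hh_def]
      simp only [hc]
      field_simp
      ring
    have right_inv : wick f g = wickUnit := by
      have e1 : wick f g = fun γ => c * wick f (wsum h) γ := wick_smul_right c f (wsum h)
      rw [e1]
      funext γ
      have e2 : wick f (wsum h) = fun γ => f 1 * wick (fun α => wickUnit α - h α) (wsum h) γ := by
        conv_lhs => rw [hf_eq]
        exact wick_smul_left (f 1) _ (wsum h)
      rw [e2]
      dsimp only
      have e3 : wick (fun α => wickUnit α - h α) (wsum h)
          = wick wickUnit (wsum h) - wick h (wsum h) := by
        have : (fun α => wickUnit α - h α) = wickUnit - h := rfl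
        rw [this, wick_sub_left]
      have e4 : wick (fun α => wickUnit α - h α) (wsum h) γ = wickUnit γ := by
        rw [e3]
        have := wick_wsum_left h hh γ
        rw [wick_unit_left]
        show wsum h γ - wick h (wsum h) γ = wickUnit γ
        rw [this]; ring
      rw [e4, hc]
      rw [← mul_assoc, inv_mul_cancel₀ hf0, one_mul]
    have left_inv : wick g f = wickUnit := by
      have e1 : wick g f = fun γ => c * wick (wsum h) f γ := wick_smul_left c (wsum h) f
      rw [e1]
      funext γ
      have e2 : wick (wsum h) f = fun γ => f 1 * wick (wsum h) (fun α => wickUnit α - h α) γ := by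
        conv_lhs => rw [hf_eq]
        exact wick_smul_right (f 1) (wsum h) _
      rw [e2]
      dsimp only
      have e3 : wick (wsum h) (fun α => wickUnit α - h α)
          = wick (wsum h) wickUnit - wick (wsum h) h := by
        have : (fun α => wickUnit α - h α) = wickUnit - h := rfl
        rw [this, wick_sub_right]
      have e4 : wick (wsum h) (fun α => wickUnit α - h α) γ = wickUnit γ := by
        rw [e3]
        have := wick_wsum_right h hh γ
        rw [wick_unit_right]
        show wsum h γ - wick (wsum h) h γ = wickUnit γ
        rw [this]; ring
      rw [e4, hc]
      rw [← mul_assoc, inv_mul_cancel₀ hf0, one_mul]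
    -- analysis : memS g
    obtain ⟨p₀, hs⟩ := hf
    have hfN : eN f p₀ ≠ ⊤ := eN_ne_top_of_summable hs
    -- h has finite norm at p₀
    have hhN : eN h p₀ ≠ ⊤ := by
      set cr : ℝ := ‖c‖^2 with hcr
      have hpt : ∀ γ, en2 h p₀ γ ≤ 2 * (en2 wickUnit p₀ γ + cr * en2 f p₀ γ) := by
        intro γ
        unfold en2
        have hw := w_pos (FreeMonoid.toList γ)
        have hwz : (0:ℝ) < w (FreeMonoid.toList γ) ^ (-(p₀:ℤ)) := zpow_pos hw _
        have hn : ‖h γ‖^2 ≤ 2 * (‖wickUnit γ‖^2 + cr * ‖f γ‖^2) := by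
          have h1 : ‖h γ‖ ≤ ‖wickUnit γ‖ + ‖c * f γ‖ := norm_sub_le _ _
          have h2 : ‖c * f γ‖ = ‖c‖ * ‖f γ‖ := norm_mul _ _
          rw [hcr]
          nlinarith [norm_nonneg (h γ), norm_nonneg (wickUnit γ), norm_nonneg (c * f γ),
            norm_nonneg c, norm_nonneg (f γ), sq_nonneg (‖wickUnit γ‖ - ‖c‖ * ‖f γ‖)]
        nlinarith [en2_nonneg wickUnit p₀ γ, en2_nonneg f p₀ γ]
      have hb : eN h p₀ ≤ 2 * (eN wickUnit p₀ + ENNReal.ofReal cr * eN f p₀) := by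
        unfold eN
        calc ∑' γ, ENNReal.ofReal (en2 h p₀ γ)
            ≤ ∑' γ, (2 * (ENNReal.ofReal (en2 wickUnit p₀ γ) +
                ENNReal.ofReal cr * ENNReal.ofReal (en2 f p₀ γ))) := by
              apply ENNReal.tsum_le_tsum
              intro γ
              calc ENNReal.ofReal (en2 h p₀ γ)
                  ≤ ENNReal.ofReal (2 * (en2 wickUnit p₀ γ + cr * en2 f p₀ γ)) :=
                    ENNReal.ofReal_le_ofReal (hpt γ)
                _ = 2 * (ENNReal.ofReal (en2 wickUnit p₀ γ) +
                      ENNReal.ofReal cr * ENNReal.ofReal (en2 f p₀ γ)) := by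
                    rw [ENNReal.ofReal_mul (by norm_num), ENNReal.ofReal_add (en2_nonneg _ _ _)
                      (mul_nonneg (by positivity) (en2_nonneg _ _ _)),
                      ENNReal.ofReal_mul (by positivity)]
                    norm_num
          _ = 2 * (∑' γ, ENNReal.ofReal (en2 wickUnit p₀ γ) +
                ENNReal.ofReal cr * ∑' γ, ENNReal.ofReal (en2 f p₀ γ)) := by
              rw [ENNReal.tsum_mul_left, ENNReal.tsum_add, ENNReal.tsum_mul_left]
      refine ne_top_of_le_ne_top ?_ hb
      rw [eN_unit]
      exact ENNReal.mul_ne_top (by norm_num)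
        (ENNReal.add_ne_top.mpr ⟨by norm_num, ENNReal.mul_ne_top ENNReal.ofReal_ne_top hfN⟩)
    -- choose k with eN h (p₀+k) ≤ 1/8
    set M : ℝ := (eN h p₀).toReal with hM
    have hMnn : 0 ≤ M := ENNReal.toReal_nonneg
    obtain ⟨k, hk⟩ : ∃ k : ℕ, ((1:ℝ)/2) ^ k < 1 / (8 * (M + 1)) := by
      have h8 : (0:ℝ) < 1 / (8 * (M + 1)) := by positivity
      exact exists_pow_lt_of_lt_one h8 (by norm_num)
    set p : ℕ := p₀ + k with hp
    have hsmall : eN h p ≤ ENNReal.ofReal (1/8 : ℝ) := by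
      calc eN h p ≤ ENNReal.ofReal ((1/2:ℝ)^k) * eN h p₀ := eN_decay hh p₀ k
        _ = ENNReal.ofReal ((1/2:ℝ)^k) * ENNReal.ofReal M := by
            rw [hM, ENNReal.ofReal_toReal hhN]
        _ = ENNReal.ofReal ((1/2:ℝ)^k * M) := by
            rw [ENNReal.ofReal_mul (by positivity)]
        _ ≤ ENNReal.ofReal (1/8 : ℝ) := by
            apply ENNReal.ofReal_le_ofReal
            have hMp : (1/2:ℝ)^k * M ≤ M / (8 * (M+1)) := by
              have h1 : (1/2:ℝ)^k * M ≤ (1/(8*(M+1))) * M :=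
                mul_le_mul_of_nonneg_right (le_of_lt hk) hMnn
              have h2 : (1/(8*(M+1))) * M = M / (8*(M+1)) := by ring
              linarith
            have : M / (8 * (M+1)) ≤ 1/8 := by
              rw [div_le_div_iff₀ (by positivity) (by norm_num)]
              nlinarith
            linarith
    -- bound on powers
    have hpow : ∀ n, eN (wpow h n) (p+1) ≤ ENNReal.ofReal ((1/4:ℝ))^n := by
      intro n
      calc eN (wpow h n) (p+1) ≤ (2 * eN h p)^n := eN_wpow_le h p n
        _ ≤ (ENNReal.ofReal (1/4:ℝ))^n := by
            apply pow_le_pow_left'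
            calc 2 * eN h p ≤ 2 * ENNReal.ofReal (1/8:ℝ) := mul_le_mul_right hsmall 2
              _ = ENNReal.ofReal (1/4:ℝ) := by
                  rw [show ((2:ℝ≥0∞)) = ENNReal.ofReal 2 by norm_num,
                    ← ENNReal.ofReal_mul (by norm_num)]
                  norm_num
    -- the series bound for wsum
    have hwsumN : eN (wsum h) (p+1) ≠ ⊤ := by
      have hpt : ∀ γ, ENNReal.ofReal (en2 (wsum h) (p+1) γ)
          ≤ 2 * ∑' n : ℕ, ENNReal.ofReal ((2:ℝ)^n * en2 (wpow h n) (p+1) γ) := by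
        intro γ
        set m := (FreeMonoid.toList γ).length with hm
        have hcs : en2 (wsum h) (p+1) γ
            ≤ 2 * ∑ n ∈ Finset.range (m+1), (2:ℝ)^n * en2 (wpow h n) (p+1) γ := by
          unfold en2 wsum
          have hw := w_pos (FreeMonoid.toList γ)
          have hwz : (0:ℝ) < w (FreeMonoid.toList γ) ^ (-((p:ℕ)+1:ℤ)) := zpow_pos hw _
          have h1 : ‖∑ n ∈ Finset.range (m+1), wpow h n γ‖
              ≤ ∑ n ∈ Finset.range (m+1), ‖wpow h n γ‖ := norm_sum_le _ _
          have h2 : ‖∑ n ∈ Finset.range (m+1), wpow h n γ‖^2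
              ≤ 2 * ∑ n ∈ Finset.range (m+1), 2^n * ‖wpow h n γ‖^2 := by
            calc ‖∑ n ∈ Finset.range (m+1), wpow h n γ‖^2
                ≤ (∑ n ∈ Finset.range (m+1), ‖wpow h n γ‖)^2 :=
                  pow_le_pow_left₀ (norm_nonneg _) h1 2
              _ ≤ 2 * ∑ n ∈ Finset.range (m+1), 2^n * ‖wpow h n γ‖^2 :=
                  weighted_cs _ m
          calc ‖∑ n ∈ Finset.range (m+1), wpow h n γ‖^2 * w (FreeMonoid.toList γ) ^ (-((p:ℕ)+1:ℤ))
              ≤ (2 * ∑ n ∈ Finset.range (m+1), 2^n * ‖wpow h n γ‖^2) *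
                  w (FreeMonoid.toList γ) ^ (-((p:ℕ)+1:ℤ)) :=
                mul_le_mul_of_nonneg_right h2 (le_of_lt hwz)
            _ = 2 * ∑ n ∈ Finset.range (m+1), (2:ℝ)^n *
                  (‖wpow h n γ‖^2 * w (FreeMonoid.toList γ) ^ (-((p:ℕ)+1:ℤ))) := by
                rw [mul_assoc, Finset.sum_mul]
                congr 1
                apply Finset.sum_congr rfl
                intro n _
                ring
        calc ENNReal.ofReal (en2 (wsum h) (p+1) γ)
            ≤ ENNReal.ofReal (2 * ∑ n ∈ Finset.range (m+1),
                (2:ℝ)^n * en2 (wpow h n) (p+1) γ) := ENNReal.ofReal_le_ofReal hcs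
          _ = 2 * ∑ n ∈ Finset.range (m+1),
                ENNReal.ofReal ((2:ℝ)^n * en2 (wpow h n) (p+1) γ) := by
              rw [ENNReal.ofReal_mul (by norm_num), ENNReal.ofReal_sum_of_nonneg
                (fun n _ => mul_nonneg (by positivity) (en2_nonneg _ _ _))]
              norm_num
          _ ≤ 2 * ∑' n : ℕ, ENNReal.ofReal ((2:ℝ)^n * en2 (wpow h n) (p+1) γ) :=
              mul_le_mul_right (ENNReal.sum_le_tsum _) 2
      have hbound : eN (wsum h) (p+1) ≤ 2 * ∑' n : ℕ, (2:ℝ≥0∞)⁻¹^n := by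
        calc eN (wsum h) (p+1)
            ≤ ∑' γ, 2 * ∑' n : ℕ, ENNReal.ofReal ((2:ℝ)^n * en2 (wpow h n) (p+1) γ) :=
              ENNReal.tsum_le_tsum hpt
          _ = 2 * ∑' n : ℕ, ∑' γ, ENNReal.ofReal ((2:ℝ)^n * en2 (wpow h n) (p+1) γ) := by
              rw [ENNReal.tsum_mul_left]
              congr 1
              exact ENNReal.tsum_comm
          _ ≤ 2 * ∑' n : ℕ, (2:ℝ≥0∞)⁻¹^n := by
              apply mul_le_mul_right
              apply ENNReal.tsum_le_tsum
              intro n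
              have e1 : ∀ γ, ENNReal.ofReal ((2:ℝ)^n * en2 (wpow h n) (p+1) γ)
                  = ENNReal.ofReal ((2:ℝ)^n) * ENNReal.ofReal (en2 (wpow h n) (p+1) γ) := by
                intro γ
                rw [ENNReal.ofReal_mul (by positivity)]
              calc ∑' γ, ENNReal.ofReal ((2:ℝ)^n * en2 (wpow h n) (p+1) γ)
                  = ENNReal.ofReal ((2:ℝ)^n) * eN (wpow h n) (p+1) := by
                    rw [tsum_congr e1, ENNReal.tsum_mul_left]
                    rfl
                _ ≤ ENNReal.ofReal ((2:ℝ)^n) * ENNReal.ofReal ((1/4:ℝ))^n :=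
                    mul_le_mul_right (hpow n) _
                _ = (2:ℝ≥0∞)⁻¹^n := by
                    rw [← ENNReal.ofReal_pow (by norm_num), ← ENNReal.ofReal_mul (by positivity),
                      ← mul_pow]
                    norm_num
                    congr 1
                    rw [one_div, ENNReal.ofReal_inv_of_pos (by norm_num)]
                    norm_num
      refine ne_top_of_le_ne_top ?_ hbound
      rw [ENNReal.tsum_geometric, ENNReal.one_sub_inv_two]
      exact ENNReal.mul_ne_top (by norm_num) (by simp)
    -- transfer to g
    have hgN : eN g (p+1) ≠ ⊤ := by
      have : ∀ γ, en2 g (p+1) γ = ‖c‖^2 * en2 (wsum h) (p+1) γ := by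
        intro γ
        unfold en2
        rw [hg_def]
        simp only [norm_mul, mul_pow]
        ring
      have : eN g (p+1) = ENNReal.ofReal (‖c‖^2) * eN (wsum h) (p+1) := by
        unfold eN
        rw [← ENNReal.tsum_mul_left]
        apply tsum_congr
        intro γ
        rw [this γ, ENNReal.ofReal_mul (by positivity)]
      rw [this]
      exact ENNReal.mul_ne_top ENNReal.ofReal_ne_top hwsumN
    exact ⟨g, ⟨p+1, summable_of_eN hgN⟩, right_inv, left_inv⟩
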